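/- Let K and K̃ be real symmetric positive semidefinite n×n matrices with K - K̃ positive semidefinite, and suppose ‖K - K̃‖ ≤ 2·√(k(n-k)+1)·σ_{k+1}(K), where σ_{k+1}(K) = λ_{k+1}(K) is the (k+1)-st largest eigenvalue of K and 0 ≤ k ≤ n. Let β > 0 and S = (K̃ + βI)^{-1/2}(K + βI)(K̃ + βI)^{-1/2}. Then I ≤ S ≤ (1 + 2·λ_{k+1}(K)·√(k(n-k)+1)/β)·I ≤ (1 + 2·λ_{k+1}(K)·(n/2 + 1)/β)·I in the Loewner order; in particular the condition number of S is at most 1 + 2·λ_{k+1}(K)·(n/2+1)/β. -/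

import Mathlib

open scoped Matrix.Norms.L2Operator
open Matrix

open scoped ComplexOrder in
/-- The square root of a positive semidefinite matrix, as `Matrix.PosSemidef.sqrt` was defined
in Mathlib (removed since, in favour of `CFC.sqrt`). -/
noncomputable def Matrix.PosSemidef.sqrt {n 𝕜 : Type*} [Fintype n] [DecidableEq n] [RCLike 𝕜]
    {A : Matrix n n 𝕜} (hA : A.PosSemidef) : Matrix n n 𝕜 :=
  hA.1.eigenvectorUnitary.1 * diagonal ((↑) ∘ Real.sqrt ∘ hA.1.eigenvalues) *
    (star hA.1.eigenvectorUnitary : Matrix n n 𝕜)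

private lemma posSemidef_sqrt' {m : Type*} [Fintype m] [DecidableEq m] {A : Matrix m m ℝ}
    (hA : A.PosSemidef) : hA.sqrt.PosSemidef := by
  unfold Matrix.PosSemidef.sqrt
  have hd : (diagonal ((↑) ∘ Real.sqrt ∘ hA.1.eigenvalues : m → ℝ)).PosSemidef :=
    PosSemidef.diagonal (fun i => by simp [Real.sqrt_nonneg])
  exact hd.mul_mul_conjTranspose_same _

private lemma sqrt_mul_self' {m : Type*} [Fintype m] [DecidableEq m] {A : Matrix m m ℝ}
    (hA : A.PosSemidef) : hA.sqrt * hA.sqrt = A := by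
  unfold Matrix.PosSemidef.sqrt
  conv_rhs => rw [hA.1.spectral_theorem]
  rw [Unitary.conjStarAlgAut_apply]
  have hU : (star hA.1.eigenvectorUnitary : Matrix m m ℝ) * hA.1.eigenvectorUnitary = 1 :=
    Unitary.coe_star_mul_self _
  have hX : ∀ X : Matrix m m ℝ,
      (star hA.1.eigenvectorUnitary : Matrix m m ℝ) * (hA.1.eigenvectorUnitary * X) = X :=
    fun X => by rw [← mul_assoc, hU, one_mul]
  simp only [mul_assoc, hX, ← mul_assoc (diagonal _) (diagonal _), diagonal_mul_diagonal]
  congr 3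
  funext i
  simp [Real.mul_self_sqrt (hA.eigenvalues_nonneg i)]


private lemma psd_smul' {m : Type*} [Fintype m] {M : Matrix m m ℝ} (hM : M.PosSemidef) {r : ℝ}
    (hr : 0 ≤ r) : (r • M).PosSemidef := by
  refine Matrix.PosSemidef.of_dotProduct_mulVec_nonneg ?_ ?_
  · unfold Matrix.IsHermitian
    rw [conjTranspose_smul, hM.1, star_trivial]
  · intro x
    rw [smul_mulVec, dotProduct_smul, smul_eq_mul]
    exact mul_nonneg hr (hM.dotProduct_mulVec_nonneg x)

private lemma psd_tsub {m : Type*} [Fintype m] [DecidableEq m] {D : Matrix m m ℝ}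
    (hD : D.PosSemidef) {t : ℝ} (ht : ‖D‖ ≤ t) :
    (t • (1 : Matrix m m ℝ) - D).PosSemidef := by
  refine Matrix.PosSemidef.of_dotProduct_mulVec_nonneg ?_ ?_
  · refine Matrix.IsHermitian.sub ?_ hD.1
    rw [smul_one_eq_diagonal]
    exact isHermitian_diagonal _
  · intro x
    have hstar : star x = x := by ext i; simp
    set y : EuclideanSpace ℝ m := (EuclideanSpace.equiv m ℝ).symm x with hy
    set z : EuclideanSpace ℝ m := (EuclideanSpace.equiv m ℝ).symm (D *ᵥ x) with hz
    have hxy : ‖z‖ ≤ ‖D‖ * ‖y‖ := D.l2_opNorm_mulVec y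
    have e1 : (inner ℝ y z : ℝ) = x ⬝ᵥ (D *ᵥ x) := by
      rw [EuclideanSpace.inner_eq_star_dotProduct]
      show (D *ᵥ x) ⬝ᵥ star x = _
      rw [hstar, dotProduct_comm]
    have e2 : (inner ℝ y y : ℝ) = x ⬝ᵥ x := by
      rw [EuclideanSpace.inner_eq_star_dotProduct]
      show star x ⬝ᵥ x = _
      rw [hstar]
    have hxx : x ⬝ᵥ x = ‖y‖ ^ 2 := by rw [← e2, real_inner_self_eq_norm_sq]
    have hcs : x ⬝ᵥ (D *ᵥ x) ≤ ‖y‖ * ‖z‖ := by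
      rw [← e1]; exact real_inner_le_norm y z
    have hbound : x ⬝ᵥ (D *ᵥ x) ≤ t * ‖y‖ ^ 2 := by
      have h0 : (0:ℝ) ≤ ‖y‖ := norm_nonneg y
      have h1 : (0:ℝ) ≤ ‖D‖ := norm_nonneg D
      nlinarith [norm_nonneg z]
    rw [sub_mulVec, smul_mulVec, one_mulVec, dotProduct_sub, dotProduct_smul, hstar,
      smul_eq_mul, hxx]
    linarith

private lemma eig_ge {m : Type*} [Fintype m] [DecidableEq m] {S : Matrix m m ℝ}
    (hSh : S.IsHermitian) {a : ℝ} (h : (S - a • (1 : Matrix m m ℝ)).PosSemidef) (i : m) :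
    a ≤ hSh.eigenvalues i := by
  set v : m → ℝ := ⇑(hSh.eigenvectorBasis i) with hv
  have hstar : star v = v := by ext j; simp
  have hvv : v ⬝ᵥ v = 1 := by
    have h2 : (inner ℝ (hSh.eigenvectorBasis i) (hSh.eigenvectorBasis i) : ℝ) = 1 := by
      rw [real_inner_self_eq_norm_sq, hSh.eigenvectorBasis.orthonormal.1 i]; norm_num
    rw [EuclideanSpace.inner_eq_star_dotProduct] at h2
    rw [← h2]; show star v ⬝ᵥ v = _; rw [hstar]
  have h0 := h.dotProduct_mulVec_nonneg v
  rw [sub_mulVec, smul_mulVec, one_mulVec, hstar, dotProduct_sub, dotProduct_smul,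
    hv, hSh.mulVec_eigenvectorBasis, dotProduct_smul, ← hv, smul_eq_mul, smul_eq_mul, hvv] at h0
  linarith

private lemma eig_le {m : Type*} [Fintype m] [DecidableEq m] {S : Matrix m m ℝ}
    (hSh : S.IsHermitian) {a : ℝ} (h : (a • (1 : Matrix m m ℝ) - S).PosSemidef) (i : m) :
    hSh.eigenvalues i ≤ a := by
  set v : m → ℝ := ⇑(hSh.eigenvectorBasis i) with hv
  have hstar : star v = v := by ext j; simp
  have hvv : v ⬝ᵥ v = 1 := by
    have h2 : (inner ℝ (hSh.eigenvectorBasis i) (hSh.eigenvectorBasis i) : ℝ) = 1 := by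
      rw [real_inner_self_eq_norm_sq, hSh.eigenvectorBasis.orthonormal.1 i]; norm_num
    rw [EuclideanSpace.inner_eq_star_dotProduct] at h2
    rw [← h2]; show star v ⬝ᵥ v = _; rw [hstar]
  have h0 := h.dotProduct_mulVec_nonneg v
  rw [sub_mulVec, smul_mulVec, one_mulVec, hstar, dotProduct_sub, dotProduct_smul,
    hv, hSh.mulVec_eigenvectorBasis, dotProduct_smul, ← hv, smul_eq_mul, smul_eq_mul, hvv] at h0
  linarith

/-- If `K, K̃` are real symmetric PSD with `K - K̃` PSD and
`‖K - K̃‖ ≤ 2 √(k(n-k)+1) σ_{k+1}(K)` (with `σ_{k+1}(K) = λ_{k+1}(K)`, eigenvalues in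
descending order `μ`, `k < n`), `β > 0`, and `S = (K̃ + βI)^{-1/2} (K + βI) (K̃ + βI)^{-1/2}`,
then `I ≤ S ≤ (1 + 2 λ_{k+1}(K) √(k(n-k)+1)/β) I ≤ (1 + 2 λ_{k+1}(K) (n/2+1)/β) I` in the
Loewner order; in particular the condition number of `S` is at most
`1 + 2 λ_{k+1}(K) (n/2+1)/β`. -/
theorem stmt15 {n k : ℕ} (hk : k < n)
    (K Kt : Matrix (Fin n) (Fin n) ℝ)
    (hK : K.PosSemidef) (hKt : Kt.PosSemidef)
    (hdiff : (K - Kt).PosSemidef)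
    (μ : Fin n → ℝ) (hμanti : Antitone μ)
    (hμ : ∃ e : Equiv.Perm (Fin n), ∀ i, μ i = hK.isHermitian.eigenvalues (e i))
    (hnorm : ‖K - Kt‖ ≤ 2 * Real.sqrt ((k : ℝ) * ((n : ℝ) - (k : ℝ)) + 1) * μ ⟨k, hk⟩)
    (β : ℝ) (hβ : 0 < β)
    (h₁ : (Kt + β • (1 : Matrix (Fin n) (Fin n) ℝ)).PosSemidef)
    (S : Matrix (Fin n) (Fin n) ℝ)
    (hS : S = h₁.sqrt⁻¹ * (K + β • (1 : Matrix (Fin n) (Fin n) ℝ)) * h₁.sqrt⁻¹) :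
    (S - 1).PosSemidef ∧
    ((1 + 2 * μ ⟨k, hk⟩ * Real.sqrt ((k : ℝ) * ((n : ℝ) - (k : ℝ)) + 1) / β)
        • (1 : Matrix (Fin n) (Fin n) ℝ) - S).PosSemidef ∧
    ((1 + 2 * μ ⟨k, hk⟩ * ((n : ℝ) / 2 + 1) / β) • (1 : Matrix (Fin n) (Fin n) ℝ)
        - (1 + 2 * μ ⟨k, hk⟩ * Real.sqrt ((k : ℝ) * ((n : ℝ) - (k : ℝ)) + 1) / β)
            • (1 : Matrix (Fin n) (Fin n) ℝ)).PosSemidef ∧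
    ∀ (hSh : S.IsHermitian),
      (∀ i, hSh.eigenvalues i ∈ Set.Icc 1 (1 + 2 * μ ⟨k, hk⟩ * ((n : ℝ) / 2 + 1) / β)) ∧
      (⨆ i, hSh.eigenvalues i) / (⨅ i, hSh.eigenvalues i)
        ≤ 1 + 2 * μ ⟨k, hk⟩ * ((n : ℝ) / 2 + 1) / β := by
  obtain ⟨e, he⟩ := hμ
  have hσ0 : 0 ≤ μ ⟨k, hk⟩ := by rw [he]; exact hK.eigenvalues_nonneg _
  set σ := μ ⟨k, hk⟩ with hσ
  set s := Real.sqrt ((k : ℝ) * ((n : ℝ) - (k : ℝ)) + 1) with hs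
  have hs0 : 0 ≤ s := Real.sqrt_nonneg _
  set t : ℝ := 2 * σ * s with ht
  have ht0 : 0 ≤ t := by positivity
  have hnorm' : ‖K - Kt‖ ≤ t := by
    rw [ht, show 2 * σ * s = 2 * s * σ from by ring]; exact hnorm
  -- positive definiteness of Kt + β•1
  have hβ1 : (β • (1 : Matrix (Fin n) (Fin n) ℝ)).PosDef := by
    rw [smul_one_eq_diagonal]
    exact Matrix.PosDef.diagonal fun _ => hβ
  have hA : (Kt + β • (1 : Matrix (Fin n) (Fin n) ℝ)).PosDef := Matrix.PosDef.posSemidef_add hKt hβ1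
  set R := h₁.sqrt with hRdef
  have hR : R.PosSemidef := posSemidef_sqrt' h₁
  have hRR : R * R = Kt + β • (1 : Matrix (Fin n) (Fin n) ℝ) := sqrt_mul_self' h₁
  have hdet : IsUnit R.det := by
    rw [isUnit_iff_ne_zero]
    intro h0
    have : (Kt + β • (1 : Matrix (Fin n) (Fin n) ℝ)).det = 0 := by
      rw [← hRR, det_mul, h0, mul_zero]
    exact hA.det_pos.ne' this
  have hinv1 : R⁻¹ * R = 1 := nonsing_inv_mul R hdet
  have hinv2 : R * R⁻¹ = 1 := mul_nonsing_inv R hdet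
  have hH : R⁻¹ᴴ = R⁻¹ := by rw [conjTranspose_nonsing_inv, hR.1]
  have congr_psd : ∀ M : Matrix (Fin n) (Fin n) ℝ, M.PosSemidef →
      (R⁻¹ * M * R⁻¹).PosSemidef := by
    intro M hM
    have := hM.mul_mul_conjTranspose_same R⁻¹
    rwa [hH] at this
  have hone : R⁻¹ * (Kt + β • (1 : Matrix (Fin n) (Fin n) ℝ)) * R⁻¹ = 1 := by
    rw [← hRR, ← mul_assoc, hinv1, one_mul, hinv2]
  -- Part 1
  have hS1 : S - 1 = R⁻¹ * (K - Kt) * R⁻¹ := by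
    have key : R⁻¹ * (K - Kt) * R⁻¹
        = R⁻¹ * (K + β • (1 : Matrix (Fin n) (Fin n) ℝ)) * R⁻¹
          - R⁻¹ * (Kt + β • (1 : Matrix (Fin n) (Fin n) ℝ)) * R⁻¹ := by
      noncomm_ring
    rw [key, hone, ← hS]
  have p1 : (S - 1).PosSemidef := by rw [hS1]; exact congr_psd _ hdiff
  -- Part 2
  set c : ℝ := 1 + 2 * σ * s / β with hc
  have hc2 : c • (1 : Matrix (Fin n) (Fin n) ℝ) - S
      = R⁻¹ * (c • (Kt + β • (1 : Matrix (Fin n) (Fin n) ℝ))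
          - (K + β • (1 : Matrix (Fin n) (Fin n) ℝ))) * R⁻¹ := by
    have key : R⁻¹ * (c • (Kt + β • (1 : Matrix (Fin n) (Fin n) ℝ))
          - (K + β • (1 : Matrix (Fin n) (Fin n) ℝ))) * R⁻¹
        = c • (R⁻¹ * (Kt + β • (1 : Matrix (Fin n) (Fin n) ℝ)) * R⁻¹)
          - R⁻¹ * (K + β • (1 : Matrix (Fin n) (Fin n) ℝ)) * R⁻¹ := by
      rw [mul_sub, sub_mul, mul_smul_comm, smul_mul_assoc]
    rw [key, hone, ← hS]
  have hM : c • (Kt + β • (1 : Matrix (Fin n) (Fin n) ℝ))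
      - (K + β • (1 : Matrix (Fin n) (Fin n) ℝ))
      = (t / β) • Kt + (t • (1 : Matrix (Fin n) (Fin n) ℝ) - (K - Kt)) := by
    rw [hc, ht]
    match_scalars <;> field_simp <;> ring
  have p2 : (c • (1 : Matrix (Fin n) (Fin n) ℝ) - S).PosSemidef := by
    rw [hc2, hM]
    exact congr_psd _ ((psd_smul' hKt (div_nonneg ht0 hβ.le)).add (psd_tsub hdiff hnorm'))
  -- Part 3
  set c' : ℝ := 1 + 2 * σ * ((n : ℝ) / 2 + 1) / β with hc'
  have hsle : s ≤ (n : ℝ) / 2 + 1 := by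
    rw [hs]
    have h1 : (k : ℝ) * ((n : ℝ) - (k : ℝ)) + 1 ≤ ((n : ℝ) / 2 + 1) ^ 2 := by
      nlinarith [sq_nonneg ((n : ℝ) - 2 * (k : ℝ)), (Nat.cast_nonneg n : (0:ℝ) ≤ n)]
    calc Real.sqrt ((k : ℝ) * ((n : ℝ) - (k : ℝ)) + 1)
        ≤ Real.sqrt (((n : ℝ) / 2 + 1) ^ 2) := Real.sqrt_le_sqrt h1
      _ = (n : ℝ) / 2 + 1 := Real.sqrt_sq (by positivity)
  have hcc : c ≤ c' := by
    rw [hc, hc']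
    gcongr
  have p3 : (c' • (1 : Matrix (Fin n) (Fin n) ℝ) - c • (1 : Matrix (Fin n) (Fin n) ℝ)).PosSemidef := by
    rw [← sub_smul]
    exact psd_smul' Matrix.PosSemidef.one (sub_nonneg.2 hcc)
  refine ⟨p1, p2, p3, ?_⟩
  -- Part 4
  intro hSh
  haveI : Nonempty (Fin n) := ⟨⟨k, hk⟩⟩
  have hub : (c' • (1 : Matrix (Fin n) (Fin n) ℝ) - S).PosSemidef := by
    have := p3.add p2
    rwa [sub_add_sub_cancel] at this
  have hlo : ∀ i, (1 : ℝ) ≤ hSh.eigenvalues i := by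
    intro i
    refine eig_ge hSh ?_ i
    rw [one_smul]; exact p1
  have hhi : ∀ i, hSh.eigenvalues i ≤ c' := fun i => eig_le hSh hub i
  refine ⟨fun i => ⟨hlo i, hhi i⟩, ?_⟩
  have hi1 : (1 : ℝ) ≤ ⨅ i, hSh.eigenvalues i := le_ciInf hlo
  have hsup : (⨆ i, hSh.eigenvalues i) ≤ c' := ciSup_le hhi
  have hsup0 : (0 : ℝ) ≤ ⨆ i, hSh.eigenvalues i := by
    have := le_ciSup (f := hSh.eigenvalues) (Set.Finite.bddAbove (Set.finite_range _)) (⟨k, hk⟩ : Fin n)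
    linarith [hlo (⟨k, hk⟩ : Fin n)]
  calc (⨆ i, hSh.eigenvalues i) / (⨅ i, hSh.eigenvalues i)
      ≤ ⨆ i, hSh.eigenvalues i := div_le_self hsup0 hi1
    _ ≤ c' := hsup
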